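/- Let X ∈ ℝ^{n×d} have rows x_1ᵀ, …, x_nᵀ with ‖x_i‖₂ = 1 for all i, let β*, β ∈ ℝ^d, let y ∈ ℝ^n, and set ε = y − Xβ*. Let 1 ≤ m ≤ n and let S ⊆ {1,…,n} with |S| = m satisfy (y_i − x_iᵀβ)² ≤ (y_j − x_jᵀβ)² for every i ∈ S and j ∉ S (i.e., S consists of m samples with smallest squared residuals at β). Then for any subset S* ⊆ {1,…,n} with |S*| = m, it holds that ‖Σ_{i∈S\S*} ε_i x_i‖₂ ≤ Σ_{i∈S*\S} |ε_i| + 2·ψ⁺(|S \ S*|)·‖β − β*‖₂, where ψ⁺(k) := max_{T ⊆ {1,…,n}, |T|=k} λ_max(Σ_{i∈T} x_i x_iᵀ). -/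

import Mathlib

set_option autoImplicit false

open Finset

/-- The largest eigenvalue of a matrix. -/
noncomputable def lambdaMax {d : ℕ} (M : Matrix (Fin d) (Fin d) ℝ) : ℝ :=
  sSup {r : ℝ | ∃ v : Fin d → ℝ, v ≠ 0 ∧ M.mulVec v = r • v}

/-- The Gram matrix `∑_{i ∈ S} x_i x_iᵀ` of a subset of the sample points. -/
noncomputable def gramMatrix {n d : ℕ} (x : Fin n → EuclideanSpace ℝ (Fin d))
    (S : Finset (Fin n)) : Matrix (Fin d) (Fin d) ℝ :=
  ∑ i ∈ S, Matrix.of fun j k => x i j * x i k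

/-- `ψ⁺(k)`: the maximum over all size-`k` subsets `S` of the largest eigenvalue
of `∑_{i ∈ S} x_i x_iᵀ`. -/
noncomputable def psiPlus {n d : ℕ} (x : Fin n → EuclideanSpace ℝ (Fin d)) (k : ℕ) : ℝ :=
  sSup {r : ℝ | ∃ S : Finset (Fin n), S.card = k ∧ r = lambdaMax (gramMatrix x S)}

section AuxStmt13

set_option maxHeartbeats 1000000

lemma eig_le {d : ℕ} (M : Matrix (Fin d) (Fin d) ℝ) {r : ℝ} {v : Fin d → ℝ}
    (hv : v ≠ 0) (hMv : M.mulVec v = r • v) :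
    r ≤ ∑ j, ∑ k, |M j k| := by
  have hvv : 0 < ∑ l, v l ^ 2 := by
    have h1 : ∃ l, v l ≠ 0 := by
      by_contra h; push_neg at h; exact hv (funext h)
    obtain ⟨l, hl⟩ := h1
    have h2 : 0 < v l ^ 2 := by positivity
    exact lt_of_lt_of_le h2 (Finset.single_le_sum (f := fun l => v l ^ 2) (fun i _ => sq_nonneg _) (Finset.mem_univ l))
  have key : r * ∑ l, v l ^ 2 ≤ (∑ j, ∑ k, |M j k|) * ∑ l, v l ^ 2 := by
    have h1 : r * ∑ l, v l ^ 2 = ∑ j, ∑ k, v j * (M j k * v k) := by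
      have : ∀ j, v j * (M.mulVec v) j = ∑ k, v j * (M j k * v k) := by
        intro j
        simp [Matrix.mulVec, dotProduct, Finset.mul_sum]
      calc r * ∑ l, v l ^ 2 = ∑ l, v l * (r * v l) := by rw [Finset.mul_sum]; exact Finset.sum_congr rfl fun l _ => by ring
        _ = ∑ j, v j * (M.mulVec v) j := by rw [hMv]; simp [mul_comm]
        _ = ∑ j, ∑ k, v j * (M j k * v k) := by simp [this]
    rw [h1, Finset.sum_mul]
    refine Finset.sum_le_sum fun j _ => ?_
    rw [Finset.sum_mul]
    refine Finset.sum_le_sum fun k _ => ?_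
    have hj : v j ^ 2 ≤ ∑ l, v l ^ 2 :=
      Finset.single_le_sum (f := fun l => v l ^ 2) (fun i _ => sq_nonneg _) (Finset.mem_univ j)
    have hk : v k ^ 2 ≤ ∑ l, v l ^ 2 :=
      Finset.single_le_sum (f := fun l => v l ^ 2) (fun i _ => sq_nonneg _) (Finset.mem_univ k)
    have habs : |M j k| ≥ 0 := abs_nonneg _
    nlinarith [le_abs_self (M j k), neg_abs_le (M j k), sq_nonneg (v j + v k), sq_nonneg (v j - v k)]
  exact le_of_mul_le_mul_right key hvv

lemma eig_bddAbove {d : ℕ} (M : Matrix (Fin d) (Fin d) ℝ) :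
    BddAbove {r : ℝ | ∃ v : Fin d → ℝ, v ≠ 0 ∧ M.mulVec v = r • v} := by
  refine ⟨∑ j, ∑ k, |M j k|, fun r hr => ?_⟩
  obtain ⟨v, hv, hMv⟩ := hr
  exact eig_le M hv hMv

lemma lambdaMax_le {d : ℕ} (M : Matrix (Fin d) (Fin d) ℝ) :
    lambdaMax M ≤ ∑ j, ∑ k, |M j k| := by
  refine Real.sSup_le (fun r hr => ?_) (by positivity)
  obtain ⟨v, hv, hMv⟩ := hr
  exact eig_le M hv hMv

lemma rayleigh {d : ℕ} (M : Matrix (Fin d) (Fin d) ℝ) (hM : M.IsHermitian)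
    (u : EuclideanSpace ℝ (Fin d)) :
    dotProduct u (M.mulVec u) ≤ lambdaMax M * ∑ j, u j ^ 2 := by
  classical
  set b := hM.eigenvectorBasis with hb
  set lam := hM.eigenvalues with hlamdef
  have hlam : ∀ i, lam i ≤ lambdaMax M := fun i =>
    le_csSup (eig_bddAbove M) ⟨b i, by simpa using b.orthonormal.ne_zero i, hM.mulVec_eigenvectorBasis i⟩
  have hinner : ∀ (a c : EuclideanSpace ℝ (Fin d)), (inner ℝ a (c) : ℝ) = dotProduct a c := by
    intro a c
    simp [PiLp.inner_apply, dotProduct, RCLike.inner_apply, mul_comm]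
  have hMu : ∀ i, dotProduct (b i) (M.mulVec u) = lam i * dotProduct (b i) u := by
    intro i
    rw [Matrix.dotProduct_mulVec, ← Matrix.mulVec_transpose]
    have hMsymm : M.transpose = M := by
      have := hM
      rwa [Matrix.IsHermitian, Matrix.conjTranspose_eq_transpose_of_trivial] at this
    rw [hMsymm]
    have h4 : M.mulVec (b i) = lam i • (b i : Fin d → ℝ) :=
      hM.mulVec_eigenvectorBasis i
    rw [h4]
    simp [dotProduct, PiLp.smul_apply, smul_eq_mul, Finset.mul_sum, mul_assoc]
  have hexp : dotProduct u (M.mulVec u) = ∑ i, lam i * (dotProduct (b i) u) ^ 2 := by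
    have h1 := b.sum_inner_mul_inner u ((WithLp.equiv 2 _).symm (M.mulVec u))
    have h2 : (inner ℝ u (((WithLp.equiv 2 (Fin d → ℝ)).symm (M.mulVec u) : EuclideanSpace ℝ (Fin d))) : ℝ)
        = dotProduct u (M.mulVec u) := by rw [hinner]; rfl
    rw [h2] at h1
    rw [← h1]
    refine Finset.sum_congr rfl fun i _ => ?_
    have h3 : (inner ℝ (b i) (((WithLp.equiv 2 (Fin d → ℝ)).symm (M.mulVec u) : EuclideanSpace ℝ (Fin d))) : ℝ)
        = dotProduct (b i) (M.mulVec u) := by rw [hinner]; rfl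
    rw [h3, hMu i, hinner u (b i)]
    rw [dotProduct_comm u (b i)]
    ring
  have hpar : ∑ i, (dotProduct (b i) u) ^ 2 = ∑ j, u j ^ 2 := by
    have h1 := b.sum_inner_mul_inner u u
    have h2 : (inner ℝ u (u) : ℝ) = ∑ j, u j ^ 2 := by
      rw [hinner]; simp [dotProduct, sq]
    rw [h2] at h1
    rw [← h1]
    refine Finset.sum_congr rfl fun i _ => ?_
    rw [hinner u (b i), hinner (b i) u, dotProduct_comm u (b i)]
    ring
  rw [hexp, ← hpar, Finset.mul_sum]
  exact Finset.sum_le_sum fun i _ => mul_le_mul_of_nonneg_right (hlam i) (sq_nonneg _)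

lemma sq_sum_pos {d : ℕ} {v : Fin d → ℝ} (hv : v ≠ 0) : 0 < ∑ l, v l ^ 2 := by
  have h1 : ∃ l, v l ≠ 0 := by
    by_contra h; push_neg at h; exact hv (funext h)
  obtain ⟨l, hl⟩ := h1
  have h2 : 0 < v l ^ 2 := by positivity
  exact lt_of_lt_of_le h2
    (Finset.single_le_sum (f := fun l => v l ^ 2) (fun i _ => sq_nonneg _) (Finset.mem_univ l))

lemma gram_herm {n d : ℕ} (x : Fin n → EuclideanSpace ℝ (Fin d)) (T : Finset (Fin n)) :
    (gramMatrix x T).IsHermitian := by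
  rw [Matrix.IsHermitian, Matrix.conjTranspose_eq_transpose_of_trivial]
  ext j k
  simp [gramMatrix, Matrix.transpose_apply, Matrix.sum_apply, mul_comm]

lemma gram_apply {n d : ℕ} (x : Fin n → EuclideanSpace ℝ (Fin d)) (T : Finset (Fin n))
    (j k : Fin d) : gramMatrix x T j k = ∑ i ∈ T, x i j * x i k := by
  simp [gramMatrix, Matrix.sum_apply]

lemma quad_eq {n d : ℕ} (x : Fin n → EuclideanSpace ℝ (Fin d)) (T : Finset (Fin n))
    (u : Fin d → ℝ) :
    dotProduct u ((gramMatrix x T).mulVec u) = ∑ i ∈ T, (∑ j, x i j * u j) ^ 2 := by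
  calc dotProduct u ((gramMatrix x T).mulVec u)
      = ∑ j, ∑ k, ∑ i ∈ T, u j * (x i j * x i k * u k) := by
        simp only [dotProduct, Matrix.mulVec, gram_apply, Finset.sum_mul,
          Finset.mul_sum, mul_assoc]
    _ = ∑ i ∈ T, ∑ j, ∑ k, u j * (x i j * x i k * u k) := by
        calc ∑ j, ∑ k, ∑ i ∈ T, u j * (x i j * x i k * u k)
            = ∑ j, ∑ i ∈ T, ∑ k, u j * (x i j * x i k * u k) :=
              Finset.sum_congr rfl fun j _ => Finset.sum_comm
          _ = ∑ i ∈ T, ∑ j, ∑ k, u j * (x i j * x i k * u k) := Finset.sum_comm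
    _ = ∑ i ∈ T, (∑ j, x i j * u j) ^ 2 := by
        refine Finset.sum_congr rfl fun i _ => ?_
        rw [sq, Finset.sum_mul_sum]
        refine Finset.sum_congr rfl fun j _ => Finset.sum_congr rfl fun k _ => by ring

lemma lambdaMax_gram_nonneg {n d : ℕ} (x : Fin n → EuclideanSpace ℝ (Fin d))
    (T : Finset (Fin n)) : 0 ≤ lambdaMax (gramMatrix x T) := by
  rcases Set.eq_empty_or_nonempty
    {r : ℝ | ∃ v : Fin d → ℝ, v ≠ 0 ∧ (gramMatrix x T).mulVec v = r • v} with h | h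
  · unfold lambdaMax; rw [h, Real.sSup_empty]
  · obtain ⟨r, v, hv, hMv⟩ := h
    have hq : dotProduct v ((gramMatrix x T).mulVec v) = r * ∑ l, v l ^ 2 := by
      rw [hMv]
      simp [dotProduct, Pi.smul_apply, smul_eq_mul, Finset.mul_sum, sq]
      exact Finset.sum_congr rfl fun l _ => by ring
    have hq2 : 0 ≤ r * ∑ l, v l ^ 2 := by
      rw [← hq, quad_eq]
      exact Finset.sum_nonneg fun i _ => sq_nonneg _
    have hr : 0 ≤ r := nonneg_of_mul_nonneg_right (by linarith [hq2] : 0 ≤ (∑ l, v l ^ 2) * r) (sq_sum_pos hv)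
    exact le_trans hr (le_csSup (eig_bddAbove _) ⟨v, hv, hMv⟩)

lemma psi_bddAbove {n d : ℕ} (x : Fin n → EuclideanSpace ℝ (Fin d)) (k : ℕ) :
    BddAbove {r : ℝ | ∃ S : Finset (Fin n), S.card = k ∧ r = lambdaMax (gramMatrix x S)} := by
  refine ⟨∑ j, ∑ l, ∑ i, |x i j * x i l|, fun r hr => ?_⟩
  obtain ⟨T, _, rfl⟩ := hr
  refine le_trans (lambdaMax_le _) ?_
  refine Finset.sum_le_sum fun j _ => Finset.sum_le_sum fun l _ => ?_
  rw [gram_apply]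
  refine le_trans (Finset.abs_sum_le_sum_abs _ _) ?_
  exact Finset.sum_le_sum_of_subset_of_nonneg (Finset.subset_univ T)
    (fun i _ _ => abs_nonneg _)

lemma lambdaMax_le_psiPlus {n d : ℕ} (x : Fin n → EuclideanSpace ℝ (Fin d))
    {T : Finset (Fin n)} {k : ℕ} (hT : T.card = k) :
    lambdaMax (gramMatrix x T) ≤ psiPlus x k :=
  le_csSup (psi_bddAbove x k) ⟨T, hT, rfl⟩

lemma psiPlus_nonneg {n d : ℕ} (x : Fin n → EuclideanSpace ℝ (Fin d))
    {T : Finset (Fin n)} {k : ℕ} (hT : T.card = k) : 0 ≤ psiPlus x k :=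
  le_trans (lambdaMax_gram_nonneg x T) (lambdaMax_le_psiPlus x hT)

lemma gram_quad_le {n d : ℕ} (x : Fin n → EuclideanSpace ℝ (Fin d))
    {T : Finset (Fin n)} {k : ℕ} (hT : T.card = k) (u : EuclideanSpace ℝ (Fin d)) :
    ∑ i ∈ T, (∑ j, x i j * u j) ^ 2 ≤ psiPlus x k * ∑ j, u j ^ 2 := by
  rw [← quad_eq]
  refine le_trans (rayleigh _ (gram_herm x T) u) ?_
  refine mul_le_mul_of_nonneg_right (lambdaMax_le_psiPlus x hT) ?_
  exact Finset.sum_nonneg fun j _ => sq_nonneg _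

end AuxStmt13

set_option maxHeartbeats 1000000 in
theorem stmt13 (n d : ℕ) (x : Fin n → EuclideanSpace ℝ (Fin d))
    (hx : ∀ i, ‖x i‖ = 1)
    (β βstar : EuclideanSpace ℝ (Fin d)) (y : Fin n → ℝ)
    (ε : Fin n → ℝ) (hε : ∀ i, ε i = y i - ∑ j, x i j * βstar j)
    (m : ℕ) (hm : 1 ≤ m) (hmn : m ≤ n)
    (S : Finset (Fin n)) (hScard : S.card = m)
    (hsel : ∀ i ∈ S, ∀ j ∉ S,
      (y i - ∑ l, x i l * β l) ^ 2 ≤ (y j - ∑ l, x j l * β l) ^ 2)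
    (Sstar : Finset (Fin n)) (hSstarcard : Sstar.card = m) :
    ‖∑ i ∈ S \ Sstar, ε i • x i‖
      ≤ (∑ i ∈ Sstar \ S, |ε i|)
        + 2 * psiPlus x (S \ Sstar).card * ‖β - βstar‖ := by
  classical
  set A := S \ Sstar with hA
  set B := Sstar \ S with hBdef
  have hAB : A.card = B.card := Finset.card_sdiff_comm (hScard.trans hSstarcard.symm)
  set k := A.card with hk
  set r : Fin n → ℝ := fun i => y i - ∑ l, x i l * β l with hrdef
  set Δ : EuclideanSpace ℝ (Fin d) := β - βstar with hΔ
  set P := psiPlus x k with hP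
  set w : EuclideanSpace ℝ (Fin d) := ∑ i ∈ A, ε i • x i with hw
  have hip : ∀ i (u : EuclideanSpace ℝ (Fin d)), (inner ℝ (x i) u : ℝ) = ∑ j, x i j * u j := by
    intro i u
    simp [PiLp.inner_apply, RCLike.inner_apply, mul_comm]
  have hnormsq : ∀ u : EuclideanSpace ℝ (Fin d), ∑ j, u j ^ 2 = ‖u‖ ^ 2 := by
    intro u
    rw [EuclideanSpace.norm_eq, Real.sq_sqrt (by positivity)]
    simp [Real.norm_eq_abs, sq_abs]
  have hCS : ∀ i (u : EuclideanSpace ℝ (Fin d)), |(inner ℝ (x i) u : ℝ)| ≤ ‖u‖ := by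
    intro i u
    calc |(inner ℝ (x i) u : ℝ)| ≤ ‖x i‖ * ‖u‖ := abs_real_inner_le_norm _ _
      _ = ‖u‖ := by rw [hx i, one_mul]
  have hdecomp : ∀ i, ε i = r i + (inner ℝ (x i) Δ : ℝ) := by
    intro i
    rw [hip i Δ, hε i]
    have hh : ∀ j, x i j * Δ j = x i j * β j - x i j * βstar j := by
      intro j
      have hΔj : Δ j = β j - βstar j := rfl
      rw [hΔj]; ring
    simp only [hh, Finset.sum_sub_distrib, hrdef]
    ring
  have habs : ∀ i ∈ S, ∀ j, j ∉ S → |r i| ≤ |r j| := by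
    intro i hi j hj
    have h : (r i) ^ 2 ≤ (r j) ^ 2 := hsel i hi j hj
    nlinarith [abs_nonneg (r i), abs_nonneg (r j), sq_abs (r i), sq_abs (r j)]
  let e : {a // a ∈ A} ≃ {b // b ∈ B} := Finset.equivOfCardEq hAB
  have hres : ∀ a : {a // a ∈ A}, |r a.1| ≤ |r (e a).1| :=
    fun a => habs a.1 (Finset.mem_sdiff.mp a.2).1 (e a).1 (Finset.mem_sdiff.mp (e a).2).2
  have hsumB : ∀ g : Fin n → ℝ, ∑ a : {a // a ∈ A}, g (e a).1 = ∑ i ∈ B, g i := by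
    intro g
    rw [← Finset.sum_coe_sort B g]
    exact Equiv.sum_comp e (fun b => g b.1)
  have hsumA : ∀ g : Fin n → ℝ, ∑ a : {a // a ∈ A}, g a.1 = ∑ i ∈ A, g i :=
    fun g => Finset.sum_coe_sort A g
  by_cases hbb : β = βstar
  · have hΔ0 : ‖Δ‖ = 0 := by rw [hΔ, hbb, sub_self, norm_zero]
    have hrε : ∀ i, ε i = r i := by
      intro i
      rw [hε i, hrdef, hbb]
    have hchain : ‖w‖ ≤ ∑ i ∈ B, |ε i| := by
      calc ‖w‖ ≤ ∑ i ∈ A, ‖ε i • x i‖ := norm_sum_le _ _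
        _ = ∑ i ∈ A, |ε i| := by
            refine Finset.sum_congr rfl fun i _ => ?_
            rw [norm_smul, hx i, mul_one, Real.norm_eq_abs]
        _ ≤ ∑ i ∈ B, |ε i| := by
            rw [← hsumA (fun i => |ε i|), ← hsumB (fun i => |ε i|)]
            refine Finset.sum_le_sum fun a _ => ?_
            rw [hrε, hrε]
            exact hres a
    rw [hΔ0]
    linarith [hchain]
  · have hD : 0 < ‖Δ‖ := by
      rw [hΔ]
      exact norm_sub_pos_iff.mpr hbb
    have hPnn : 0 ≤ P := psiPlus_nonneg x hk.symm
    by_cases hw0 : w = 0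
    · rw [hw0, norm_zero]
      have h1 : 0 ≤ ∑ i ∈ B, |ε i| := Finset.sum_nonneg fun i _ => abs_nonneg _
      nlinarith [hD, hPnn, h1]
    · have hW : 0 < ‖w‖ := norm_pos_iff.mpr hw0
      have hGA : ∑ i ∈ A, (inner ℝ (x i) w : ℝ) ^ 2 ≤ P * ‖w‖ ^ 2 := by
        calc ∑ i ∈ A, (inner ℝ (x i) w : ℝ) ^ 2 = ∑ i ∈ A, (∑ j, x i j * w j) ^ 2 :=
            Finset.sum_congr rfl fun i _ => by rw [hip]
          _ ≤ psiPlus x k * ∑ j, w j ^ 2 := gram_quad_le x hk.symm w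
          _ = P * ‖w‖ ^ 2 := by rw [hnormsq, hP]
      have hGAΔ : ∑ i ∈ A, (inner ℝ (x i) Δ : ℝ) ^ 2 ≤ P * ‖Δ‖ ^ 2 := by
        calc ∑ i ∈ A, (inner ℝ (x i) Δ : ℝ) ^ 2 = ∑ i ∈ A, (∑ j, x i j * Δ j) ^ 2 :=
            Finset.sum_congr rfl fun i _ => by rw [hip]
          _ ≤ psiPlus x k * ∑ j, Δ j ^ 2 := gram_quad_le x hk.symm Δ
          _ = P * ‖Δ‖ ^ 2 := by rw [hnormsq, hP]
      have hGBΔ : ∑ i ∈ B, (inner ℝ (x i) Δ : ℝ) ^ 2 ≤ P * ‖Δ‖ ^ 2 := by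
        calc ∑ i ∈ B, (inner ℝ (x i) Δ : ℝ) ^ 2 = ∑ i ∈ B, (∑ j, x i j * Δ j) ^ 2 :=
            Finset.sum_congr rfl fun i _ => by rw [hip]
          _ ≤ psiPlus x k * ∑ j, Δ j ^ 2 := gram_quad_le x hAB.symm Δ
          _ = P * ‖Δ‖ ^ 2 := by rw [hnormsq, hP]
      have hW2 : ‖w‖ ^ 2 = ∑ i ∈ A, ε i * (inner ℝ (x i) w : ℝ) := by
        have h1 : (inner ℝ w w : ℝ) = ‖w‖ ^ 2 := real_inner_self_eq_norm_sq w
        rw [← h1]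
        nth_rewrite 1 [hw]
        rw [sum_inner]
        exact Finset.sum_congr rfl fun i _ => real_inner_smul_left _ _ _
      have hsplit : ‖w‖ ^ 2 = (∑ i ∈ A, r i * (inner ℝ (x i) w : ℝ))
          + ∑ i ∈ A, (inner ℝ (x i) Δ : ℝ) * (inner ℝ (x i) w : ℝ) := by
        rw [hW2, ← Finset.sum_add_distrib]
        refine Finset.sum_congr rfl fun i _ => ?_
        rw [hdecomp i]
        ring
      have amgm : ∀ a b : ℝ, 2 * (‖Δ‖ * ‖w‖) * (a * b) ≤ ‖w‖ ^ 2 * a ^ 2 + ‖Δ‖ ^ 2 * b ^ 2 := by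
        intro a b
        nlinarith [sq_nonneg (‖w‖ * a - ‖Δ‖ * b)]
      have hT2 : ∑ i ∈ A, (inner ℝ (x i) Δ : ℝ) * (inner ℝ (x i) w : ℝ) ≤ P * ‖Δ‖ * ‖w‖ := by
        have h2 : 2 * (‖Δ‖ * ‖w‖) * ∑ i ∈ A, (inner ℝ (x i) Δ : ℝ) * (inner ℝ (x i) w : ℝ)
            ≤ ‖w‖ ^ 2 * (P * ‖Δ‖ ^ 2) + ‖Δ‖ ^ 2 * (P * ‖w‖ ^ 2) := by
          rw [Finset.mul_sum]
          calc ∑ i ∈ A, 2 * (‖Δ‖ * ‖w‖) * ((inner ℝ (x i) Δ : ℝ) * (inner ℝ (x i) w : ℝ))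
              ≤ ∑ i ∈ A, (‖w‖ ^ 2 * (inner ℝ (x i) Δ : ℝ) ^ 2
                  + ‖Δ‖ ^ 2 * (inner ℝ (x i) w : ℝ) ^ 2) :=
                Finset.sum_le_sum fun i _ => amgm _ _
            _ = ‖w‖ ^ 2 * (∑ i ∈ A, (inner ℝ (x i) Δ : ℝ) ^ 2)
                  + ‖Δ‖ ^ 2 * ∑ i ∈ A, (inner ℝ (x i) w : ℝ) ^ 2 := by
                rw [Finset.sum_add_distrib, Finset.mul_sum, Finset.mul_sum]
            _ ≤ _ := by
                have h3 := mul_le_mul_of_nonneg_left hGAΔ (sq_nonneg ‖w‖)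
                have h4 := mul_le_mul_of_nonneg_left hGA (sq_nonneg ‖Δ‖)
                linarith
        nlinarith [mul_pos hD hW, h2]
      have hT1 : ∑ i ∈ A, r i * (inner ℝ (x i) w : ℝ)
          ≤ ‖w‖ * (∑ i ∈ B, |ε i|) + P * ‖Δ‖ * ‖w‖ := by
        have step1 : ∑ i ∈ A, r i * (inner ℝ (x i) w : ℝ)
            ≤ ∑ a : {a // a ∈ A}, |r (e a).1| * |(inner ℝ (x a.1) w : ℝ)| := by
          rw [← hsumA (fun i => r i * (inner ℝ (x i) w : ℝ))]
          refine Finset.sum_le_sum fun a _ => ?_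
          calc r a.1 * (inner ℝ (x a.1) w : ℝ) ≤ |r a.1 * (inner ℝ (x a.1) w : ℝ)| := le_abs_self _
            _ = |r a.1| * |(inner ℝ (x a.1) w : ℝ)| := abs_mul _ _
            _ ≤ |r (e a).1| * |(inner ℝ (x a.1) w : ℝ)| :=
                mul_le_mul_of_nonneg_right (hres a) (abs_nonneg _)
        have step2 : ∀ a : {a // a ∈ A},
            |r (e a).1| ≤ |ε (e a).1| + |(inner ℝ (x (e a).1) Δ : ℝ)| := by
          intro a
          have h3 : r (e a).1 = ε (e a).1 - (inner ℝ (x (e a).1) Δ : ℝ) := by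
            rw [hdecomp (e a).1]; ring
          rw [h3]
          exact abs_sub _ _
        have step3 : ∑ a : {a // a ∈ A}, |r (e a).1| * |(inner ℝ (x a.1) w : ℝ)|
            ≤ (∑ a : {a // a ∈ A}, |ε (e a).1| * |(inner ℝ (x a.1) w : ℝ)|)
              + ∑ a : {a // a ∈ A}, |(inner ℝ (x (e a).1) Δ : ℝ)| * |(inner ℝ (x a.1) w : ℝ)| := by
          rw [← Finset.sum_add_distrib]
          refine Finset.sum_le_sum fun a _ => ?_
          have h5 := mul_le_mul_of_nonneg_right (step2 a) (abs_nonneg (inner ℝ (x a.1) w : ℝ))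
          linarith [h5]
        have step4 : ∑ a : {a // a ∈ A}, |ε (e a).1| * |(inner ℝ (x a.1) w : ℝ)|
            ≤ ‖w‖ * ∑ i ∈ B, |ε i| := by
          calc ∑ a : {a // a ∈ A}, |ε (e a).1| * |(inner ℝ (x a.1) w : ℝ)|
              ≤ ∑ a : {a // a ∈ A}, |ε (e a).1| * ‖w‖ :=
                Finset.sum_le_sum fun a _ => mul_le_mul_of_nonneg_left (hCS _ _) (abs_nonneg _)
            _ = ‖w‖ * ∑ a : {a // a ∈ A}, |ε (e a).1| := by rw [← Finset.sum_mul, mul_comm]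
            _ = ‖w‖ * ∑ i ∈ B, |ε i| := by rw [hsumB (fun i => |ε i|)]
        have step5 : ∑ a : {a // a ∈ A}, |(inner ℝ (x (e a).1) Δ : ℝ)| * |(inner ℝ (x a.1) w : ℝ)|
            ≤ P * ‖Δ‖ * ‖w‖ := by
          have hBsum : ∑ a : {a // a ∈ A}, (inner ℝ (x (e a).1) Δ : ℝ) ^ 2
              = ∑ i ∈ B, (inner ℝ (x i) Δ : ℝ) ^ 2 := hsumB (fun i => (inner ℝ (x i) Δ : ℝ) ^ 2)
          have hAsum : ∑ a : {a // a ∈ A}, (inner ℝ (x a.1) w : ℝ) ^ 2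
              = ∑ i ∈ A, (inner ℝ (x i) w : ℝ) ^ 2 := hsumA (fun i => (inner ℝ (x i) w : ℝ) ^ 2)
          have h2 : 2 * (‖Δ‖ * ‖w‖)
              * ∑ a : {a // a ∈ A}, |(inner ℝ (x (e a).1) Δ : ℝ)| * |(inner ℝ (x a.1) w : ℝ)|
              ≤ ‖w‖ ^ 2 * (P * ‖Δ‖ ^ 2) + ‖Δ‖ ^ 2 * (P * ‖w‖ ^ 2) := by
            rw [Finset.mul_sum]
            calc ∑ a : {a // a ∈ A},
                2 * (‖Δ‖ * ‖w‖) * (|(inner ℝ (x (e a).1) Δ : ℝ)| * |(inner ℝ (x a.1) w : ℝ)|)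
                ≤ ∑ a : {a // a ∈ A}, (‖w‖ ^ 2 * |(inner ℝ (x (e a).1) Δ : ℝ)| ^ 2
                    + ‖Δ‖ ^ 2 * |(inner ℝ (x a.1) w : ℝ)| ^ 2) :=
                  Finset.sum_le_sum fun a _ => amgm _ _
              _ = ‖w‖ ^ 2 * (∑ a : {a // a ∈ A}, (inner ℝ (x (e a).1) Δ : ℝ) ^ 2)
                    + ‖Δ‖ ^ 2 * ∑ a : {a // a ∈ A}, (inner ℝ (x a.1) w : ℝ) ^ 2 := by
                  simp only [sq_abs]
                  rw [Finset.sum_add_distrib, Finset.mul_sum, Finset.mul_sum]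
              _ ≤ _ := by
                  rw [hBsum, hAsum]
                  have h3 := mul_le_mul_of_nonneg_left hGBΔ (sq_nonneg ‖w‖)
                  have h4 := mul_le_mul_of_nonneg_left hGA (sq_nonneg ‖Δ‖)
                  linarith
          nlinarith [mul_pos hD hW, h2]
        linarith [step1, step3, step4, step5]
      have hkey : ‖w‖ ^ 2 ≤ ‖w‖ * (∑ i ∈ B, |ε i|) + 2 * P * ‖Δ‖ * ‖w‖ := by
        rw [hsplit]
        linarith [hT1, hT2]
      nlinarith [hW, hkey]
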